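/- arXiv:1507.06572 — 5 statements merged into one kernel-verified Lean document; each statement's English description precedes it below -/
import Mathlib

section
/- Let G and H be modules over a principal ideal domain R and let I be a partial isomorphism system witnessing G ≅_p H. Then every f ∈ I preserves p-heights for every prime p of R: for all x in the domain of f, |f(x)|_p = |x|_p (where equality includes both sides being ∞). -/
noncomputable section

namespace UlmW

universe u

variable {R : Type*} [CommRing R]

/-- The submodule `p^α M`, defined by transfinite recursion on `α`. -/
def ppow {M : Type u} [AddCommGroup M] [Module R M] (p : R) (α : Ordinal.{u}) :
    Submodule R M :=
  Ordinal.limitRecOn α ⊤ (fun _ S => Submodule.map (LinearMap.lsmul R M p) S)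
    fun β _ ih => ⨅ (γ : Set.Iio β), ih γ.1 γ.2

open scoped Classical in
/-- The `p`-height of `x`, with `⊤` playing the role of `∞`. -/
def pheight {M : Type u} [AddCommGroup M] [Module R M] (p : R) (x : M) :
    WithTop Ordinal.{u} :=
  if h : ∃ α : Ordinal.{u}, x ∈ ppow p α ∧ x ∉ ppow p (α + 1) then (h.choose : WithTop Ordinal)
  else ⊤

/-- `H⁰ = {x : ∃ a ≠ 0, a • x ∈ H}`. -/
def hull {M : Type u} [AddCommGroup M] [Module R M] (H : Submodule R M) : Set M :=
  {x | ∃ a : R, a ≠ 0 ∧ a • x ∈ H}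

/-- `X` is a decomposition set with respect to the single prime `p`. -/
def IsDecompWrt {M : Type u} [AddCommGroup M] [Module R M] (p : R) (X : Set M) : Prop :=
  (LinearIndependent R (fun x : X => (x : M))) ∧
  (∀ x ∈ X, ∀ a : R, a ≠ 0 → a • x ≠ 0) ∧
  (∀ s : Finset M, ↑s ⊆ X → ∀ c : M → R,
    pheight p (∑ x ∈ s, c x • x) = s.inf fun x => pheight p (c x • x))

/-- `X` is a decomposition set (with respect to every prime of `R`). -/
def IsDecompositionSet (R : Type*) [CommRing R] {M : Type u} [AddCommGroup M] [Module R M]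
    (X : Set M) : Prop :=
  ∀ p : R, Prime p → IsDecompWrt p X

/-- partial decomposition basis, heights taken w.r.t. a fixed prime `p`. -/
def IsPDBWrt {M : Type u} [AddCommGroup M] [Module R M] (p : R) (C : Set (Set M)) : Prop :=
  C.Nonempty ∧ (∀ X ∈ C, X.Finite) ∧ (∀ X ∈ C, IsDecompWrt p X) ∧
  ∀ X ∈ C, ∀ x : M, ∃ Y ∈ C, X ⊆ Y ∧ x ∈ hull (Submodule.span R Y)

/-- partial decomposition basis (heights w.r.t. all primes of `R`). -/
def IsPDB (R : Type*) [CommRing R] {M : Type u} [AddCommGroup M] [Module R M] (C : Set (Set M)) : Prop :=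
  C.Nonempty ∧ (∀ X ∈ C, X.Finite) ∧ (∀ X ∈ C, IsDecompositionSet R X) ∧
  ∀ X ∈ C, ∀ x : M, ∃ Y ∈ C, X ⊆ Y ∧ x ∈ hull (Submodule.span R Y)

/-- A partial isomorphism system `I : G ≅_p H`. -/
def IsPartialIsoSystem {M N : Type*} [AddCommGroup M] [Module R M]
    [AddCommGroup N] [Module R N] (I : Set (M →ₗ.[R] N)) : Prop :=
  I.Nonempty ∧
  (∀ f ∈ I, Function.Injective f.toFun) ∧
  (∀ f ∈ I, ∀ a : M, ∃ g ∈ I, f ≤ g ∧ a ∈ g.domain) ∧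
  (∀ f ∈ I, ∀ b : N, ∃ g ∈ I, f ≤ g ∧ ∃ y : g.domain, g y = b)

/-- The Ulm sequence of `x`: `U(x) = (|pⁱ x|)ᵢ`. -/
def UlmSeqOf {M : Type u} [AddCommGroup M] [Module R M] (p : R) (x : M) :
    ℕ → WithTop Ordinal.{u} :=
  fun i => pheight p ((p ^ i) • x)

/-- `u` is an Ulm sequence. -/
def IsUlmSeq (u : ℕ → WithTop Ordinal.{u}) : Prop :=
  ∀ i, (u i = ⊤ → u (i + 1) = ⊤) ∧ (u i ≠ ⊤ → u i < u (i + 1))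

/-- Equivalence of Ulm sequences. -/
def UlmEquiv (u v : ℕ → WithTop Ordinal.{u}) : Prop :=
  ∃ m n : ℕ, ∀ i, u (i + n) = v (i + m)

/-- `X` contains at least `n` elements whose Ulm sequence is equivalent to `u`. -/
def HasAtLeast {M : Type u} [AddCommGroup M] [Module R M] (p : R)
    (u : ℕ → WithTop Ordinal.{u}) (n : ℕ) (X : Set M) : Prop :=
  ∃ s : Finset M, ↑s ⊆ X ∧ n ≤ s.card ∧ ∀ x ∈ s, UlmEquiv (UlmSeqOf p x) u

/-- `ŵ_C(e,G)` where `e` is the class of the Ulm sequence `u`. -/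
def wHat {M : Type u} [AddCommGroup M] [Module R M] (p : R) (C : Set (Set M))
    (u : ℕ → WithTop Ordinal.{u}) : ℕ∞ :=
  sSup {N : ℕ∞ | ∃ n : ℕ, N = (n : ℕ∞) ∧ ∃ X ∈ C, HasAtLeast p u n X}

/-- `x` is proper with respect to `S`. -/
def IsProper {M : Type u} [AddCommGroup M] [Module R M] (p : R) (S : Submodule R M)
    (x : M) : Prop :=
  ∀ s ∈ S, pheight p (x + s) ≤ pheight p x

/-- `H` is a nice submodule. -/
def IsNice {M : Type u} [AddCommGroup M] [Module R M] (p : R) (H : Submodule R M) : Prop :=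
  ∀ x : M, ∃ h ∈ H, ∀ h' ∈ H, pheight p (x + h') ≤ pheight p (x + h)

/-- The Ulm invariant `u_p(σ, M)`: the dimension of `(p^σ M)[p]/(p^{σ+1} M)[p]`
over the residue field `R/(p)`. -/
def uCard (p : R) (M : Type u) [AddCommGroup M] [Module R M] (σ : Ordinal.{u}) :
    Cardinal :=
  let V : Submodule R M := ppow p σ ⊓ Submodule.torsionBy R M p
  let W : Submodule R V := (ppow p (σ + 1) ⊓ Submodule.torsionBy R M p).comap V.subtype
  Module.rank (R ⧸ Ideal.span {p})
    ((V ⧸ W) ⧸ (Ideal.span {p} • (⊤ : Submodule R (V ⧸ W))))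

/-- `û_p(σ, M) = min (u_p(σ, M), ω)`. -/
def uHat (p : R) (M : Type u) [AddCommGroup M] [Module R M] (σ : Ordinal.{u}) : Cardinal :=
  min (uCard p M σ) Cardinal.aleph0

/-- `û_p(∞, M) = min (dim (p^∞ M)[p], ω)`. -/
def uHatInf (p : R) (M : Type u) [AddCommGroup M] [Module R M] : Cardinal :=
  let V : Submodule R M := (⨅ α : Ordinal.{u}, ppow p α) ⊓ Submodule.torsionBy R M p
  min (Module.rank (R ⧸ Ideal.span {p})
    (V ⧸ (Ideal.span {p} • (⊤ : Submodule R V)))) Cardinal.aleph0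

end UlmW

open UlmW

/-- The ideal `(p) ⊆ ℤ` is prime. -/
instance zpSpanPrime (p : ℤ) [hp : Fact (Prime p)] : (Ideal.span {p} : Ideal ℤ).IsPrime :=
  (Ideal.span_singleton_prime hp.out.ne_zero).mpr hp.out

/-- `ℤ_(p)`, the integers localized at the prime `p`. -/
abbrev Zp (p : ℤ) [Fact (Prime p)] : Type :=
  Localization.AtPrime (Ideal.span {p} : Ideal ℤ)


universe u

open UlmW

section Aux

variable {R : Type*} [CommRing R]

lemma ppow_zero' {M : Type u} [AddCommGroup M] [Module R M] (p : R) :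
    (ppow p 0 : Submodule R M) = ⊤ := Ordinal.limitRecOn_zero _ _ _

lemma ppow_succ' {M : Type u} [AddCommGroup M] [Module R M] (p : R) (α : Ordinal.{u}) :
    (ppow p (α + 1) : Submodule R M)
      = Submodule.map (LinearMap.lsmul R M p) (ppow p α) := by
  rw [ppow, Ordinal.add_one_eq_succ, Ordinal.limitRecOn_succ]
  rfl

lemma ppow_limit' {M : Type u} [AddCommGroup M] [Module R M] (p : R) {β : Ordinal.{u}}
    (h : Order.IsSuccLimit β) :
    (ppow p β : Submodule R M) = ⨅ (γ : Set.Iio β), ppow p γ.1 := by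
  rw [ppow, Ordinal.limitRecOn_limit _ _ _ _ h]
  rfl

lemma ppow_anti' {M : Type u} [AddCommGroup M] [Module R M] (p : R) :
    ∀ β α : Ordinal.{u}, α ≤ β → (ppow p β : Submodule R M) ≤ ppow p α := by
  intro β
  induction β using Ordinal.induction with
  | h β IH =>
    intro α h
    rcases eq_or_lt_of_le h with rfl | hlt
    · exact le_rfl
    rcases Ordinal.zero_or_succ_or_isSuccLimit β with h0 | ⟨γ, rfl⟩ | hl
    · exact absurd (h0 ▸ hlt) (not_lt_of_ge (zero_le (a := α)))
    · have h1 : (ppow p (Order.succ γ) : Submodule R M) ≤ ppow p γ := by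
        rw [← Ordinal.add_one_eq_succ, ppow_succ']
        rintro x ⟨y, hy, rfl⟩
        exact Submodule.smul_mem _ p hy
      exact h1.trans (IH γ (Order.lt_succ γ) α (Order.lt_succ_iff.mp hlt))
    · rw [ppow_limit' p hl]
      exact iInf_le_of_le ⟨α, hlt⟩ le_rfl

lemma pheight_congr' {M N : Type u} [AddCommGroup M] [Module R M] [AddCommGroup N] [Module R N]
    (p : R) (x : M) (y : N) (h : ∀ α : Ordinal.{u}, x ∈ ppow p α ↔ y ∈ ppow p α) :
    pheight p x = pheight p y := by
  classical
  unfold pheight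
  by_cases h1 : ∃ α : Ordinal.{u}, x ∈ ppow p α ∧ x ∉ ppow p (α + 1)
  · have h2 : ∃ α : Ordinal.{u}, y ∈ ppow p α ∧ y ∉ ppow p (α + 1) := by
      obtain ⟨α, ha, hb⟩ := h1
      exact ⟨α, (h α).mp ha, fun hc => hb ((h _).mpr hc)⟩
    rw [dif_pos h1, dif_pos h2]
    have h1s := h1.choose_spec
    have h2s := h2.choose_spec
    have heq : h1.choose = h2.choose := by
      by_contra hne
      rcases lt_or_gt_of_ne hne with hlt | hlt
      · have hle : h1.choose + 1 ≤ h2.choose := by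
          rw [Ordinal.add_one_eq_succ]; exact Order.succ_le_of_lt hlt
        exact h1s.2 ((h _).mpr (ppow_anti' p _ _ hle h2s.1))
      · have hle : h2.choose + 1 ≤ h1.choose := by
          rw [Ordinal.add_one_eq_succ]; exact Order.succ_le_of_lt hlt
        exact h2s.2 ((h _).mp (ppow_anti' p _ _ hle h1s.1))
    exact congrArg _ heq
  · have h2 : ¬ ∃ α : Ordinal.{u}, y ∈ ppow p α ∧ y ∉ ppow p (α + 1) := by
      rintro ⟨α, ha, hb⟩
      exact h1 ⟨α, (h α).mpr ha, fun hc => hb ((h _).mp hc)⟩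
    rw [dif_neg h1, dif_neg h2]

end Aux

theorem statement_0 {R : Type*} [CommRing R] [IsDomain R] [IsPrincipalIdealRing R]
    {G H : Type u} [AddCommGroup G] [Module R G] [AddCommGroup H] [Module R H]
    (I : Set (G →ₗ.[R] H)) (hI : IsPartialIsoSystem I)
    (p : R) (hp : Prime p) (f : G →ₗ.[R] H) (hf : f ∈ I) (x : f.domain) :
    pheight p (f x) = pheight p (x : G) := by
  have key : ∀ α : Ordinal.{u}, ∀ f ∈ I, ∀ x : f.domain,
      ((x : G) ∈ ppow p α ↔ f x ∈ ppow p α) := by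
    intro α
    induction α using Ordinal.induction with
    | h α IH =>
      intro f hf x
      rcases Ordinal.zero_or_succ_or_isSuccLimit α with rfl | ⟨β, rfl⟩ | hl
      · simp [ppow_zero']
      · have hβ : β < Order.succ β := Order.lt_succ β
        rw [← Ordinal.add_one_eq_succ, ppow_succ', ppow_succ']
        constructor
        · rintro ⟨y, hy, hxy⟩
          obtain ⟨g, hgI, hfg, hyd⟩ := hI.2.2.1 f hf y
          have hx' : (x : G) ∈ g.domain := hfg.1 x.2
          have hfx : f x = g ⟨x, hx'⟩ := hfg.2 rfl
          have hxe : (⟨x, hx'⟩ : g.domain) = p • (⟨y, hyd⟩ : g.domain) :=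
            Subtype.ext (by simpa using hxy.symm)
          refine ⟨g ⟨y, hyd⟩, (IH β hβ g hgI ⟨y, hyd⟩).mp hy, ?_⟩
          rw [hfx, hxe, g.map_smul]
          simp
        · rintro ⟨z, hz, hfz⟩
          obtain ⟨g, hgI, hfg, w, hw⟩ := hI.2.2.2 f hf z
          have hx' : (x : G) ∈ g.domain := hfg.1 x.2
          have hfx : f x = g ⟨x, hx'⟩ := hfg.2 rfl
          have hinj := hI.2.1 g hgI
          have hxe : (⟨x, hx'⟩ : g.domain) = p • w := by
            apply hinj
            show g _ = g _
            rw [← hfx, g.map_smul, hw, ← hfz]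
            simp
          have hwmem : (w : G) ∈ ppow p β :=
            (IH β hβ g hgI w).mpr (by rw [hw]; exact hz)
          refine ⟨w, hwmem, ?_⟩
          have := congrArg Subtype.val hxe
          simpa using this.symm
      · rw [ppow_limit' p hl, ppow_limit' p hl]
        simp only [Submodule.mem_iInf]
        exact forall_congr' fun γ => IH γ.1 γ.2 f hf x
  exact (pheight_congr' p (x : G) (f x) (fun α => key α f hf x)).symm

end
end

section
/- Let G and H be modules over a principal ideal domain R, let I be a partial isomorphism system witnessing G ≅_p H, and suppose G has a partial decomposition basis C. Then C' = { f(X) : X ∈ C, f ∈ I, X ⊆ dom(f) } is a partial decomposition basis for H. In particular, if G ≅_p H and G has a partial decomposition basis, then so does H. -/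
noncomputable section

open UlmW

universe u

open UlmW

section AuxProof

variable {R : Type*} [CommRing R]

section Basic

variable {M : Type u} [AddCommGroup M] [Module R M]

theorem aux_ppow_zero (p : R) : (ppow p (0 : Ordinal.{u}) : Submodule R M) = ⊤ := by
  simp [ppow]

theorem aux_ppow_succ (p : R) (α : Ordinal.{u}) :
    (ppow p (Order.succ α) : Submodule R M)
      = Submodule.map (LinearMap.lsmul R M p) (ppow p α) := by
  simp [ppow]

theorem aux_ppow_add_one (p : R) (α : Ordinal.{u}) :
    (ppow p (α + 1) : Submodule R M)
      = Submodule.map (LinearMap.lsmul R M p) (ppow p α) := by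
  rw [Ordinal.add_one_eq_succ, aux_ppow_succ]

theorem aux_ppow_limit (p : R) {α : Ordinal.{u}} (h : Order.IsSuccLimit α) :
    (ppow p α : Submodule R M) = ⨅ γ : Set.Iio α, ppow p γ.1 := by
  rw [ppow, Ordinal.limitRecOn_limit _ _ _ _ h]; rfl

theorem aux_ppow_antitone (p : R) : ∀ {α β : Ordinal.{u}}, β ≤ α →
    (ppow p α : Submodule R M) ≤ ppow p β := by
  intro α
  induction α using Ordinal.limitRecOn with
  | zero => intro β hβ; rw [nonpos_iff_eq_zero.mp hβ]
  | add_one α ih =>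
    intro β hβ
    rcases eq_or_lt_of_le hβ with h | h
    · rw [h]
    · have hstep : ppow p (Order.succ α) ≤ (ppow p α : Submodule R M) := by
        rw [aux_ppow_succ]
        intro x hx
        rw [Submodule.mem_map] at hx
        obtain ⟨y, hy, rfl⟩ := hx
        simpa using Submodule.smul_mem _ p hy
      exact hstep.trans (ih (Order.lt_add_one_iff.mp h))
  | limit α hα ih =>
    intro β hβ
    rcases eq_or_lt_of_le hβ with h | h
    · rw [h]
    · rw [aux_ppow_limit p hα]
      exact iInf_le (fun γ : Set.Iio α => (ppow p γ.1 : Submodule R M)) ⟨β, h⟩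

theorem aux_pheight_eq (p : R) {x : M} {α : Ordinal.{u}}
    (h1 : x ∈ ppow p α) (h2 : x ∉ ppow p (α + 1)) :
    pheight p x = (α : WithTop Ordinal.{u}) := by
  classical
  have hex : ∃ β : Ordinal.{u}, x ∈ ppow p β ∧ x ∉ ppow p (β + 1) := ⟨α, h1, h2⟩
  rw [pheight, dif_pos hex]
  have : hex.choose = α := by
    obtain ⟨hm, hn⟩ := hex.choose_spec
    by_contra hne
    rcases lt_or_gt_of_ne hne with h | h
    · exact hn (aux_ppow_antitone p
        (by rwa [Ordinal.add_one_eq_succ, Order.succ_le_iff]) h1)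
    · exact h2 (aux_ppow_antitone p
        (by rwa [Ordinal.add_one_eq_succ, Order.succ_le_iff]) hm)
  rw [this]

end Basic

section Transfer

variable {G H : Type u} [AddCommGroup G] [Module R G] [AddCommGroup H] [Module R H]

/-- The image of `X` under a partial map `f`. -/
abbrev Fimg (f : G →ₗ.[R] H) (X : Set G) : Set H :=
  {y : H | ∃ x : f.domain, (x : G) ∈ X ∧ f x = y}

theorem aux_mem_ppow_transfer (p : R) {I : Set (G →ₗ.[R] H)}
    (hI : IsPartialIsoSystem I) (α : Ordinal.{u}) :
    ∀ f ∈ I, ∀ x : f.domain, ((x : G) ∈ ppow p α ↔ f x ∈ ppow p α) := by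
  induction α using Ordinal.limitRecOn with
  | zero => simp [aux_ppow_zero]
  | add_one α ih =>
    intro f hf x
    simp only [aux_ppow_add_one, Submodule.mem_map]
    constructor
    · rintro ⟨y, hy, hyx⟩
      obtain ⟨g, hg, hfg, hyg⟩ := hI.2.2.1 f hf y
      refine ⟨g ⟨y, hyg⟩, (ih g hg ⟨y, hyg⟩).mp hy, ?_⟩
      have hx' : (x : G) ∈ g.domain := hfg.1 x.2
      have h1 : f x = g ⟨(x : G), hx'⟩ := hfg.2 rfl
      have h2 : (⟨(x : G), hx'⟩ : g.domain) = p • ⟨y, hyg⟩ := by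
        apply Subtype.ext
        simpa using hyx.symm
      rw [h1, h2, g.map_smul]
      simp
    · rintro ⟨z, hz, hzx⟩
      obtain ⟨g, hg, hfg, y', hy'⟩ := hI.2.2.2 f hf z
      have hx' : (x : G) ∈ g.domain := hfg.1 x.2
      have h1 : f x = g ⟨(x : G), hx'⟩ := hfg.2 rfl
      have h2 : g (p • y') = g ⟨(x : G), hx'⟩ := by
        rw [g.map_smul, hy', ← h1]
        simpa using hzx
      have h3 : p • y' = (⟨(x : G), hx'⟩ : g.domain) := hI.2.1 g hg h2
      refine ⟨(y' : G), (ih g hg y').mpr (hy' ▸ hz), ?_⟩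
      have := congrArg (Subtype.val) h3
      simpa using this
  | limit α hα ih =>
    intro f hf x
    rw [aux_ppow_limit p hα, aux_ppow_limit p hα, Submodule.mem_iInf, Submodule.mem_iInf]
    exact forall_congr' fun γ => ih γ.1 γ.2 f hf x

theorem aux_pheight_transfer (p : R) {I : Set (G →ₗ.[R] H)}
    (hI : IsPartialIsoSystem I) {f : G →ₗ.[R] H} (hf : f ∈ I) (x : f.domain) :
    pheight p (f x) = pheight p (x : G) := by
  classical
  by_cases hex : ∃ α : Ordinal.{u}, (x : G) ∈ ppow p α ∧ (x : G) ∉ ppow p (α + 1)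
  · obtain ⟨α, h1, h2⟩ := hex
    rw [aux_pheight_eq p h1 h2,
      aux_pheight_eq p ((aux_mem_ppow_transfer p hI α f hf x).mp h1)
        (fun h => h2 ((aux_mem_ppow_transfer p hI (α + 1) f hf x).mpr h))]
  · have hex' : ¬ ∃ α : Ordinal.{u}, f x ∈ ppow p α ∧ f x ∉ ppow p (α + 1) := by
      rintro ⟨α, h1, h2⟩
      exact hex ⟨α, (aux_mem_ppow_transfer p hI α f hf x).mpr h1,
        fun h => h2 ((aux_mem_ppow_transfer p hI (α + 1) f hf x).mp h)⟩
    rw [pheight, dif_neg hex', pheight, dif_neg hex]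

theorem aux_extend_finset {I : Set (G →ₗ.[R] H)} (hI : IsPartialIsoSystem I)
    {f : G →ₗ.[R] H} (hf : f ∈ I) (s : Finset G) :
    ∃ g ∈ I, f ≤ g ∧ (↑s : Set G) ⊆ (g.domain : Set G) := by
  classical
  induction s using Finset.induction_on with
  | empty => exact ⟨f, hf, le_refl f, by simp⟩
  | @insert a s ha ih =>
    obtain ⟨g, hg, hfg, hs⟩ := ih
    obtain ⟨g', hg', hgg', hag'⟩ := hI.2.2.1 g hg a
    refine ⟨g', hg', hfg.trans hgg', ?_⟩
    intro z hz
    rcases Finset.mem_insert.mp (Finset.mem_coe.mp hz) with rfl | hzs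
    · exact hag'
    · exact hgg'.1 (hs (Finset.mem_coe.mpr hzs))

theorem aux_fimg_mono (f : G →ₗ.[R] H) {X Y : Set G} (h : X ⊆ Y) :
    Fimg f X ⊆ Fimg f Y := by
  rintro y ⟨x, hx, rfl⟩; exact ⟨x, h hx, rfl⟩

theorem aux_fimg_eq {f g : G →ₗ.[R] H} (h : f ≤ g) {X : Set G}
    (hX : X ⊆ (f.domain : Set G)) : Fimg f X = Fimg g X := by
  ext y
  constructor
  · rintro ⟨x, hx, rfl⟩
    exact ⟨⟨x, h.1 x.2⟩, hx, (h.2 rfl).symm⟩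
  · rintro ⟨x, hx, rfl⟩
    exact ⟨⟨x, hX hx⟩, hx, h.2 rfl⟩

theorem aux_pmap_span (g : G →ₗ.[R] H) {Y : Set G} (hY : Y ⊆ (g.domain : Set G))
    (z : g.domain) (hz : (z : G) ∈ Submodule.span R Y) :
    g z ∈ Submodule.span R (Fimg g Y) := by
  have hspan : Submodule.span R Y ≤ g.domain := Submodule.span_le.mpr hY
  have key : ∀ w : G, ∀ hw : w ∈ Submodule.span R Y,
      g ⟨w, hspan hw⟩ ∈ Submodule.span R (Fimg g Y) := by
    intro w hw
    induction hw using Submodule.span_induction with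
    | mem u hu => exact Submodule.subset_span ⟨⟨u, hY hu⟩, hu, rfl⟩
    | zero =>
      have h0 : (⟨(0 : G), hspan (Submodule.zero_mem _)⟩ : g.domain) = 0 :=
        Subtype.ext rfl
      rw [h0, g.map_zero]
      exact Submodule.zero_mem _
    | add u v hu hv ihu ihv =>
      have hadd : (⟨u + v, hspan (Submodule.add_mem _ hu hv)⟩ : g.domain)
          = ⟨u, hspan hu⟩ + ⟨v, hspan hv⟩ := Subtype.ext rfl
      rw [hadd, g.map_add]
      exact Submodule.add_mem _ ihu ihv
    | smul a u hu ihu =>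
      have hsm : (⟨a • u, hspan (Submodule.smul_mem _ a hu)⟩ : g.domain)
          = a • ⟨u, hspan hu⟩ := Subtype.ext rfl
      rw [hsm, g.map_smul]
      exact Submodule.smul_mem _ a ihu
  have hzz : z = ⟨(z : G), hspan hz⟩ := Subtype.ext rfl
  rw [hzz]
  exact key _ hz

theorem aux_decomp_transfer (p : R) {I : Set (G →ₗ.[R] H)} (hI : IsPartialIsoSystem I)
    {f : G →ₗ.[R] H} (hf : f ∈ I) {X : Set G} (hX : X ⊆ (f.domain : Set G))
    (hD : IsDecompWrt p X) : IsDecompWrt p (Fimg f X) := by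
  classical
  obtain ⟨hli, hord, hsum⟩ := hD
  have hinj : Function.Injective f.toFun := hI.2.1 f hf
  set v : X → f.domain := fun x => ⟨(x : G), hX x.2⟩ with hv
  have hliv : LinearIndependent R v := by
    apply LinearIndependent.of_comp f.domain.subtype
    have hcomp : (⇑f.domain.subtype ∘ v) = fun x : X => (x : G) := rfl
    rw [hcomp]
    exact hli
  have hliv2 : LinearIndependent R (⇑f.toFun ∘ v) :=
    hliv.map' f.toFun (LinearMap.ker_eq_bot.mpr hinj)
  set e : X → Fimg f X := fun x => ⟨f (v x), ⟨v x, x.2, rfl⟩⟩ with he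
  have hebij : Function.Bijective e := by
    constructor
    · intro x1 x2 h12
      have h12' : f.toFun (v x1) = f.toFun (v x2) := congrArg Subtype.val h12
      have h12'' := hinj h12'
      exact Subtype.ext (show (x1 : G) = (x2 : G) from congrArg (Subtype.val : f.domain → G) h12'')
    · rintro ⟨y, x', hx', rfl⟩
      refine ⟨⟨(x' : G), hx'⟩, Subtype.ext ?_⟩
      show f (v ⟨(x' : G), hx'⟩) = f x'
      have hvv : v ⟨(x' : G), hx'⟩ = x' := Subtype.ext rfl
      rw [hvv]
  let eqv := Equiv.ofBijective e hebij
  refine ⟨?_, ?_, ?_⟩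
  · have hfe : (fun y : Fimg f X => (y : H)) = (⇑f.toFun ∘ v) ∘ eqv.symm := by
      funext y
      have hy : e (eqv.symm y) = y := eqv.apply_symm_apply y
      exact (congrArg Subtype.val hy).symm
    rw [hfe]
    exact hliv2.comp eqv.symm eqv.symm.injective
  · rintro y ⟨x', hx', rfl⟩ a ha hay
    have hz : f.toFun (a • x') = f.toFun 0 := by
      show f (a • x') = _
      rw [f.map_smul, hay, LinearMap.map_zero f.toFun]
    have h0 : a • x' = 0 := hinj hz
    have h0' : a • (x' : G) = 0 := by
      simpa using congrArg Subtype.val h0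
    exact hord _ hx' a ha h0'
  · intro s hs c
    have hch : ∀ y ∈ s, ∃ x : f.domain, (x : G) ∈ X ∧ f x = y :=
      fun y hy => hs (Finset.mem_coe.mpr hy)
    choose! xf hxf1 hxf2 using hch
    have hinjOn : ∀ y1 ∈ s, ∀ y2 ∈ s, ((xf y1 : G)) = ((xf y2 : G)) → y1 = y2 := by
      intro y1 h1 y2 h2 hxy
      rw [← hxf2 y1 h1, ← hxf2 y2 h2]
      exact congrArg _ (Subtype.ext hxy)
    set t : Finset G := s.image (fun y => (xf y : G)) with ht
    have htX : (↑t : Set G) ⊆ X := by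
      intro z hz
      simp only [ht, Finset.coe_image, Set.mem_image, Finset.mem_coe] at hz
      obtain ⟨y, hy, rfl⟩ := hz
      exact hxf1 y hy
    set W : f.domain := ∑ y ∈ s, c y • xf y with hW
    set c' : G → R := fun z => if h : z ∈ f.domain then c (f ⟨z, h⟩) else 0 with hc'
    have hc'xf : ∀ y ∈ s, c' ((xf y : G)) = c y := by
      intro y hy
      have h1 : c' ((xf y : G)) = c (f (xf y)) := dif_pos (xf y).2
      rw [h1, hxf2 y hy]
    have hWcoe : (W : G) = ∑ z ∈ t, c' z • z := by
      rw [ht, Finset.sum_image hinjOn]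
      rw [hW]
      push_cast
      refine Finset.sum_congr rfl fun y hy => ?_
      rw [hc'xf y hy]
    have hfW : f W = ∑ y ∈ s, c y • y := by
      rw [hW]
      show f.toFun _ = _
      rw [map_sum]
      refine Finset.sum_congr rfl fun y hy => ?_
      rw [LinearMap.map_smul]
      exact congrArg _ (hxf2 y hy)
    calc pheight p (∑ y ∈ s, c y • y) = pheight p (f W) := by rw [hfW]
      _ = pheight p (W : G) := aux_pheight_transfer p hI hf W
      _ = pheight p (∑ z ∈ t, c' z • z) := by rw [hWcoe]
      _ = t.inf (fun z => pheight p (c' z • z)) := hsum t htX c'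
      _ = s.inf (fun y => pheight p (c y • y)) := by
          rw [ht, Finset.inf_image]
          refine Finset.inf_congr rfl fun y hy => ?_
          show pheight p (c' ((xf y : G)) • (xf y : G)) = pheight p (c y • y)
          rw [hc'xf y hy]
          have htr := aux_pheight_transfer p hI hf (c y • xf y)
          rw [f.map_smul, hxf2 y hy] at htr
          simpa using htr.symm

end Transfer

end AuxProof

theorem statement_1 {R : Type*} [CommRing R] [IsDomain R] [IsPrincipalIdealRing R]
    {G H : Type u} [AddCommGroup G] [Module R G] [AddCommGroup H] [Module R H]
    (I : Set (G →ₗ.[R] H)) (hI : IsPartialIsoSystem I)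
    (C : Set (Set G)) (hC : IsPDB R C) :
    IsPDB R {Y : Set H | ∃ X ∈ C, ∃ f ∈ I, X ⊆ (f.domain : Set G) ∧
        Y = {y : H | ∃ x : f.domain, (x : G) ∈ X ∧ f x = y}} ∧
    ∃ C' : Set (Set H), IsPDB R C' := by
  classical
  obtain ⟨hCne, hCfin, hCdec, hCext⟩ := hC
  set C' : Set (Set H) := {Y : Set H | ∃ X ∈ C, ∃ f ∈ I, X ⊆ (f.domain : Set G) ∧
      Y = {y : H | ∃ x : f.domain, (x : G) ∈ X ∧ f x = y}} with hC'
  have hmem : ∀ X ∈ C, ∀ f ∈ I, X ⊆ (f.domain : Set G) → Fimg f X ∈ C' :=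
    fun X hX f hf hXd => ⟨X, hX, f, hf, hXd, rfl⟩
  have key : IsPDB R C' := by
    refine ⟨?_, ?_, ?_, ?_⟩
    · obtain ⟨X, hX⟩ := hCne
      obtain ⟨f, hf⟩ := hI.1
      obtain ⟨g, hg, hfg, hXg⟩ := aux_extend_finset hI hf (hCfin X hX).toFinset
      rw [Set.Finite.coe_toFinset] at hXg
      exact ⟨Fimg g X, hmem X hX g hg hXg⟩
    · rintro Y ⟨X, hX, f, hf, hXd, rfl⟩
      have himg : {y : H | ∃ x : f.domain, (x : G) ∈ X ∧ f x = y}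
          = (fun x : f.domain => f x) '' (Subtype.val ⁻¹' X) := by
        ext y
        constructor
        · rintro ⟨x, hx, rfl⟩; exact ⟨x, hx, rfl⟩
        · rintro ⟨x, hx, rfl⟩; exact ⟨x, hx, rfl⟩
      rw [himg]
      exact ((hCfin X hX).preimage Subtype.val_injective.injOn).image _
    · rintro Y ⟨X, hX, f, hf, hXd, rfl⟩ p hp
      exact aux_decomp_transfer p hI hf hXd (hCdec X hX p hp)
    · rintro Y ⟨X, hX, f, hf, hXd, rfl⟩ b
      obtain ⟨g1, hg1, hfg1, x0, hx0⟩ := hI.2.2.2 f hf b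
      obtain ⟨Z, hZC, hXZ, hx0hull⟩ := hCext X hX (x0 : G)
      obtain ⟨a, ha, haz⟩ := hx0hull
      obtain ⟨g2, hg2, hg12, hZg2⟩ := aux_extend_finset hI hg1 (hCfin Z hZC).toFinset
      rw [Set.Finite.coe_toFinset] at hZg2
      refine ⟨Fimg g2 Z, hmem Z hZC g2 hg2 hZg2, ?_, ?_⟩
      · show Fimg f X ⊆ Fimg g2 Z
        rw [aux_fimg_eq (hfg1.trans hg12) hXd]
        exact aux_fimg_mono g2 hXZ
      · refine ⟨a, ha, ?_⟩
        have hx0d : (x0 : G) ∈ g2.domain := hg12.1 x0.2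
        have hb : g2 ⟨(x0 : G), hx0d⟩ = b := by
          rw [← hx0]
          exact (hg12.2 rfl).symm
        have hab : a • b = g2 (a • (⟨(x0 : G), hx0d⟩ : g2.domain)) := by
          rw [g2.map_smul, hb]
        rw [hab]
        apply aux_pmap_span g2 hZg2
        simpa using haz
  exact ⟨key, C', key⟩

end
end

section
/- Let G be a module over a principal ideal domain R with partial decomposition bases C and C', and let X ∈ C and Y ∈ C'. Then there exist decomposition sets X' and Y' in G such that X ⊆ X', Y ⊆ Y', X' is the union of an ascending chain of elements of C, Y' is the union of an ascending chain of elements of C', and ⟨X'⟩⁰ = ⟨Y'⟩⁰. -/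
noncomputable section

open UlmW

universe u

open UlmW

section Aux

variable {R : Type*} [CommRing R] [IsDomain R] {G : Type u} [AddCommGroup G] [Module R G]

lemma hull_mono' {H H' : Submodule R G} (h : H ≤ H') : hull H ⊆ hull H' :=
  fun _ ⟨a, ha, hax⟩ => ⟨a, ha, h hax⟩

/-- Over a domain, `hull H` is itself a submodule. -/
def hullSub (H : Submodule R G) : Submodule R G where
  carrier := hull H
  zero_mem' := ⟨1, one_ne_zero, by simpa using H.zero_mem⟩
  add_mem' := by
    rintro x y ⟨a, ha, hax⟩ ⟨b, hb, hbx⟩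
    refine ⟨a * b, mul_ne_zero ha hb, ?_⟩
    rw [smul_add]
    exact H.add_mem (by rw [mul_comm, mul_smul]; exact H.smul_mem _ hax)
      (by rw [mul_smul]; exact H.smul_mem _ hbx)
  smul_mem' := by
    rintro c x ⟨a, ha, hax⟩
    exact ⟨a, ha, by rw [smul_comm]; exact H.smul_mem _ hax⟩

lemma hull_hull {H : Submodule R G} {x : G} (hx : x ∈ hull (hullSub H)) : x ∈ hull H := by
  obtain ⟨a, ha, hax⟩ := hx
  obtain ⟨b, hb, hbax⟩ := hax
  exact ⟨b * a, mul_ne_zero hb ha, by rwa [mul_smul]⟩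

lemma hull_span_subset {S : Set G} {H : Submodule R G} (h : S ⊆ hull H) :
    hull (Submodule.span R S) ⊆ hull H := by
  intro x hx
  exact hull_hull (hull_mono' (Submodule.span_le.mpr h) hx)

lemma extend_lemma {D : Set (Set G)} (hD : IsPDB R D) {A : Set G} (hA : A ∈ D)
    {s : Set G} (hs : s.Finite) :
    ∃ B ∈ D, A ⊆ B ∧ s ⊆ hull (Submodule.span R B) := by
  refine Set.Finite.induction_on s hs ⟨A, hA, subset_rfl, by simp⟩ ?_
  intro x s hxs _ ih
  obtain ⟨B, hB, hAB, hsB⟩ := ih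
  obtain ⟨B', hB', hBB', hxB'⟩ := hD.2.2.2 B hB x
  refine ⟨B', hB', hAB.trans hBB', Set.insert_subset hxB' ?_⟩
  exact hsB.trans (hull_mono' (Submodule.span_mono hBB'))

lemma finset_subset_chain {Xs : ℕ → Set G} (hmono : Monotone Xs) (s : Finset G)
    (hs : ↑s ⊆ ⋃ i, Xs i) : ∃ i, ↑s ⊆ Xs i := by
  classical
  induction s using Finset.induction_on with
  | empty => exact ⟨0, by simp⟩
  | @insert a t ha ih =>
    rw [Finset.coe_insert, Set.insert_subset_iff] at hs
    obtain ⟨i, hi⟩ := ih hs.2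
    obtain ⟨j, hj⟩ := Set.mem_iUnion.mp hs.1
    exact ⟨max i j, fun x hx => by
      rcases Finset.mem_insert.mp (by exact_mod_cast hx) with h | h
      · exact hmono (le_max_right i j) (h ▸ hj)
      · exact hmono (le_max_left i j) (hi h)⟩

lemma decomp_iUnion {Xs : ℕ → Set G} (hmono : Monotone Xs)
    (hdec : ∀ i, IsDecompositionSet R (Xs i)) :
    IsDecompositionSet R (⋃ i, Xs i) := by
  intro p hp
  refine ⟨?_, ?_, ?_⟩
  · exact linearIndepOn_iUnion_of_directed (v := id) (hmono.directed_le.mono_comp _ (fun _ _ h => h))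
      (fun i => ((hdec i) p hp).1)
  · intro x hx a ha
    obtain ⟨i, hi⟩ := Set.mem_iUnion.mp hx
    exact ((hdec i) p hp).2.1 x hi a ha
  · intro s hs c
    obtain ⟨i, hi⟩ := finset_subset_chain hmono s hs
    exact ((hdec i) p hp).2.2 s hi c

end Aux

theorem statement_2 {R : Type*} [CommRing R] [IsDomain R] [IsPrincipalIdealRing R]
    {G : Type u} [AddCommGroup G] [Module R G]
    (C C' : Set (Set G)) (hC : IsPDB R C) (hC' : IsPDB R C')
    (X : Set G) (hX : X ∈ C) (Y : Set G) (hY : Y ∈ C') :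
    ∃ X' Y' : Set G,
      IsDecompositionSet R X' ∧ IsDecompositionSet R Y' ∧
      X ⊆ X' ∧ Y ⊆ Y' ∧
      (∃ Xs : ℕ → Set G, (∀ i, Xs i ∈ C) ∧ (∀ i, Xs i ⊆ Xs (i + 1)) ∧ X' = ⋃ i, Xs i) ∧
      (∃ Ys : ℕ → Set G, (∀ i, Ys i ∈ C') ∧ (∀ i, Ys i ⊆ Ys (i + 1)) ∧ Y' = ⋃ i, Ys i) ∧
      hull (Submodule.span R X') = hull (Submodule.span R Y') := by
  classical
  -- the one-step extension
  have step : ∀ t : {q : Set G × Set G // q.1 ∈ C ∧ q.2 ∈ C'},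
      ∃ t' : {q : Set G × Set G // q.1 ∈ C ∧ q.2 ∈ C'},
        t.1.1 ⊆ t'.1.1 ∧ t.1.2 ⊆ t'.1.2 ∧
        t.1.2 ⊆ hull (Submodule.span R t'.1.1) ∧
        t'.1.1 ⊆ hull (Submodule.span R t'.1.2) := by
    rintro ⟨⟨A, B⟩, hA, hB⟩
    obtain ⟨A', hA', hAA', hBA'⟩ := extend_lemma hC hA (hC'.2.1 B hB)
    obtain ⟨B', hB', hBB', hA'B'⟩ := extend_lemma hC' hB (hC.2.1 A' hA')
    exact ⟨⟨(A', B'), hA', hB'⟩, hAA', hBB', hBA', hA'B'⟩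
  set f : ℕ → {q : Set G × Set G // q.1 ∈ C ∧ q.2 ∈ C'} :=
    fun n => (fun t => (step t).choose)^[n] ⟨(X, Y), hX, hY⟩ with hf
  have hf0 : f 0 = ⟨(X, Y), hX, hY⟩ := rfl
  have hfs : ∀ n, f (n + 1) = (step (f n)).choose := by
    intro n
    exact Function.iterate_succ_apply' (fun t => (step t).choose) n _
  set Xs : ℕ → Set G := fun n => (f n).1.1 with hXs
  set Ys : ℕ → Set G := fun n => (f n).1.2 with hYs
  have hspec : ∀ n, Xs n ⊆ Xs (n + 1) ∧ Ys n ⊆ Ys (n + 1) ∧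
      Ys n ⊆ hull (Submodule.span R (Xs (n + 1))) ∧
      Xs (n + 1) ⊆ hull (Submodule.span R (Ys (n + 1))) := by
    intro n
    have := (step (f n)).choose_spec
    rw [← hfs n] at this
    exact this
  have hXmono : Monotone Xs := monotone_nat_of_le_succ fun n => (hspec n).1
  have hYmono : Monotone Ys := monotone_nat_of_le_succ fun n => (hspec n).2.1
  have hXsC : ∀ i, Xs i ∈ C := fun i => (f i).2.1
  have hYsC : ∀ i, Ys i ∈ C' := fun i => (f i).2.2
  refine ⟨⋃ i, Xs i, ⋃ i, Ys i,
    decomp_iUnion hXmono (fun i => hC.2.2.1 _ (hXsC i)),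
    decomp_iUnion hYmono (fun i => hC'.2.2.1 _ (hYsC i)),
    ?_, ?_, ⟨Xs, hXsC, fun i => (hspec i).1, rfl⟩, ⟨Ys, hYsC, fun i => (hspec i).2.1, rfl⟩, ?_⟩
  · exact (show X = Xs 0 from rfl) ▸ Set.subset_iUnion Xs 0
  · exact (show Y = Ys 0 from rfl) ▸ Set.subset_iUnion Ys 0
  · have hXin : (⋃ i, Xs i) ⊆ hull (Submodule.span R (⋃ i, Ys i)) := by
      rintro x hx
      obtain ⟨i, hi⟩ := Set.mem_iUnion.mp hx
      have : x ∈ Xs (i + 1) := (hspec i).1 hi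
      exact hull_mono' (Submodule.span_mono (Set.subset_iUnion Ys (i + 1)))
        ((hspec i).2.2.2 this)
    have hYin : (⋃ i, Ys i) ⊆ hull (Submodule.span R (⋃ i, Xs i)) := by
      rintro y hy
      obtain ⟨i, hi⟩ := Set.mem_iUnion.mp hy
      exact hull_mono' (Submodule.span_mono (Set.subset_iUnion Xs (i + 1)))
        ((hspec i).2.2.1 hi)
    exact Set.Subset.antisymm (hull_span_subset hXin) (hull_span_subset hYin)

end
end

section
/- Let G be a module over Z_p (the integers localized at a prime p) with partial decomposition bases C and C'. Suppose that for some equivalence class e of Ulm sequences and some n ∈ ℕ, ŵ_C(e,G) ≥ n, i.e. some X ∈ C contains at least n elements x with U(x) ∈ e. Then for every Y ∈ C' there is a Ỹ ∈ C' such that Y ⊆ Ỹ and Ỹ contains at least n elements y with U(y) ∈ e. -/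
noncomputable section

open UlmW

universe u

open UlmW

namespace UlmW
section PP
variable {R : Type*} [CommRing R] {M : Type u} [AddCommGroup M] [Module R M] (p : R)

lemma ppow_zero : ppow (M := M) p (0 : Ordinal) = (⊤ : Submodule R M) :=
  Ordinal.limitRecOn_zero _ _ _

lemma ppow_succ (α : Ordinal.{u}) :
    ppow (M := M) p (α + 1) = Submodule.map (LinearMap.lsmul R M p) (ppow p α) := by
  rw [Ordinal.add_one_eq_succ]
  exact Ordinal.limitRecOn_succ _ _ _ _

lemma ppow_limit {β : Ordinal.{u}} (hβ : Order.IsSuccLimit β) :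
    ppow (M := M) p β = ⨅ (γ : Set.Iio β), ppow (M := M) p γ.1 :=
  Ordinal.limitRecOn_limit _ _ _ _ hβ

lemma ppow_succ_le (α : Ordinal.{u}) : ppow (M := M) p (α + 1) ≤ ppow p α := by
  rw [ppow_succ]
  rintro x ⟨y, hy, rfl⟩
  exact Submodule.smul_mem _ _ hy

lemma ppow_anti : ∀ {β α : Ordinal.{u}}, α ≤ β → ppow (M := M) p β ≤ ppow p α := by
  intro β
  induction β using Ordinal.induction with
  | h β IH =>
    intro α hαβ
    rcases Ordinal.zero_or_succ_or_isSuccLimit β with h0 | ⟨γ, rfl⟩ | hlim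
    · subst h0
      rw [nonpos_iff_eq_zero.mp hαβ]
    · rcases Order.le_succ_iff_eq_or_le.mp hαβ with rfl | hle
      · exact le_rfl
      · refine le_trans ?_ (IH γ (Order.lt_succ γ) hle)
        rw [← Ordinal.add_one_eq_succ]
        exact ppow_succ_le p γ
    · rcases eq_or_lt_of_le hαβ with rfl | hlt
      · exact le_rfl
      · rw [ppow_limit p hlim]
        exact iInf_le _ (⟨α, hlt⟩ : Set.Iio β)

lemma mem_ppow_all {x : M}
    (hx : ¬∃ α : Ordinal.{u}, x ∈ ppow p α ∧ x ∉ ppow p (α + 1)) :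
    ∀ α : Ordinal.{u}, x ∈ ppow p α := by
  intro α
  induction α using Ordinal.induction with
  | h α IH =>
    rcases Ordinal.zero_or_succ_or_isSuccLimit α with h0 | ⟨γ, rfl⟩ | hlim
    · subst h0; rw [ppow_zero]; trivial
    · by_contra hmem
      exact hx ⟨γ, IH γ (Order.lt_succ γ), by rwa [Ordinal.add_one_eq_succ]⟩
    · rw [ppow_limit p hlim]
      rw [Submodule.mem_iInf]
      exact fun γ => IH γ.1 γ.2

lemma le_of_mem_not_mem {x y : M} {α β : Ordinal.{u}}
    (h1 : x ∈ ppow (M := M) p α) (h2 : y ∉ ppow (M := M) p (β + 1))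
    (hxy : ∀ γ, x ∈ ppow (M := M) p γ → y ∈ ppow p γ) : α ≤ β := by
  by_contra hlt
  push_neg at hlt
  exact h2 (hxy _ (ppow_anti p (by rw [Ordinal.add_one_eq_succ]; exact Order.succ_le_of_lt hlt) h1))

lemma pheight_eq {x : M} {α : Ordinal.{u}} (h1 : x ∈ ppow p α) (h2 : x ∉ ppow p (α + 1)) :
    pheight p x = (α : WithTop Ordinal.{u}) := by
  classical
  have hex : ∃ β : Ordinal.{u}, x ∈ ppow p β ∧ x ∉ ppow p (β + 1) := ⟨α, h1, h2⟩
  rw [pheight, dif_pos hex]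
  obtain ⟨hb1, hb2⟩ := hex.choose_spec
  have h1' : hex.choose ≤ α := le_of_mem_not_mem p hb1 h2 (fun _ h => h)
  have h2' : α ≤ hex.choose := le_of_mem_not_mem p h1 hb2 (fun _ h => h)
  rw [le_antisymm h1' h2']

lemma pheight_le_of_imp {x y : M} (hxy : ∀ α : Ordinal.{u}, x ∈ ppow p α → y ∈ ppow p α) :
    pheight p x ≤ pheight p y := by
  classical
  by_cases hy : ∃ β : Ordinal.{u}, y ∈ ppow p β ∧ y ∉ ppow p (β + 1)
  · obtain ⟨β, hb1, hb2⟩ := hy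
    rw [pheight_eq p hb1 hb2]
    by_cases hx : ∃ α : Ordinal.{u}, x ∈ ppow p α ∧ x ∉ ppow p (α + 1)
    · obtain ⟨α, ha1, ha2⟩ := hx
      rw [pheight_eq p ha1 ha2]
      exact_mod_cast le_of_mem_not_mem p ha1 hb2 hxy
    · exact absurd (hxy _ (mem_ppow_all p hx (β + 1))) hb2
  · have htop : pheight p y = ⊤ := by rw [pheight, dif_neg hy]
    rw [htop]; exact le_top

lemma pheight_zero : pheight p (0 : M) = ⊤ := by
  rw [pheight, dif_neg]
  rintro ⟨α, -, h2⟩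
  exact h2 (zero_mem _)

lemma pheight_smul_le (c : R) (x : M) : pheight p x ≤ pheight p (c • x) :=
  pheight_le_of_imp p (fun _ h => Submodule.smul_mem _ c h)

lemma pheight_unit_smul {v : R} (hv : IsUnit v) (x : M) : pheight p (v • x) = pheight p x := by
  refine le_antisymm (pheight_le_of_imp p fun α h => ?_) (pheight_smul_le p v x)
  have hmul : ((hv.unit⁻¹ : Rˣ) : R) * v = 1 := hv.val_inv_mul
  have : ((hv.unit⁻¹ : Rˣ) : R) • (v • x) = x := by
    rw [smul_smul, hmul, one_smul]
  rw [← this]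
  exact Submodule.smul_mem _ _ h

lemma ulmseq_smul_unit_pow {v : R} (hv : IsUnit v) (k : ℕ) (x : M) (j : ℕ) :
    UlmSeqOf p ((v * p ^ k) • x) j = UlmSeqOf p x (j + k) := by
  have h1 : (p ^ j : R) • (v * p ^ k) • x = v • ((p ^ (j + k) : R) • x) := by
    rw [smul_smul, smul_smul, pow_add]; ring_nf
  rw [UlmSeqOf, h1, pheight_unit_smul p hv]
  rfl

lemma ulmseq_smul_dvd {a : R} {k : ℕ} (h : (p : R) ^ k ∣ a) (x : M) (j : ℕ) :
    UlmSeqOf p x (j + k) ≤ UlmSeqOf p (a • x) j := by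
  obtain ⟨c, rfl⟩ := h
  have h1 : (p ^ j : R) • (p ^ k * c) • x = c • ((p ^ (j + k) : R) • x) := by
    rw [smul_smul, smul_smul, pow_add]; ring_nf
  rw [UlmSeqOf, UlmSeqOf, h1]
  exact pheight_smul_le p c _

lemma ulmseq_zero_smul (x : M) (j : ℕ) : UlmSeqOf p ((0 : R) • x) j = ⊤ := by
  rw [UlmSeqOf, zero_smul, smul_zero, pheight_zero]

end PP

section PP2
variable {R : Type*} [CommRing R] {M : Type u} [AddCommGroup M] [Module R M] (p : R)

lemma ulm_monotone {e : ℕ → WithTop Ordinal.{u}} (he : IsUlmSeq e) : Monotone e := by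
  apply monotone_nat_of_le_succ
  intro i
  by_cases h : e i = ⊤
  · rw [h, (he i).1 h]
  · exact le_of_lt ((he i).2 h)

/-- min of finitely many tails of `e` is a tail of `e`, attained by one term. -/
lemma tail_min {ι : Type*} {e : ℕ → WithTop Ordinal.{u}} (hmono : Monotone e)
    (t : Finset ι) (ht : t.Nonempty) (f : ι → ℕ → WithTop Ordinal.{u})
    (hf : ∀ i ∈ t, ∃ m n : ℕ, ∀ j, f i (j + n) = e (j + m)) :
    ∃ i₀ ∈ t, ∃ m N : ℕ,
      (∀ j, (t.inf fun i => f i (j + N)) = e (j + m)) ∧ (∀ j, f i₀ (j + N) = e (j + m)) := by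
  classical
  have hf' : ∀ i : ι, ∃ m n : ℕ, i ∈ t → ∀ j, f i (j + n) = e (j + m) := by
    intro i
    by_cases h : i ∈ t
    · obtain ⟨m, n, hmn⟩ := hf i h
      exact ⟨m, n, fun _ => hmn⟩
    · exact ⟨0, 0, fun hc => absurd hc h⟩
  choose m n hmn using hf'
  set N := t.sup n with hN
  have key : ∀ i ∈ t, ∀ j, f i (j + N) = e (j + (N - n i + m i)) := by
    intro i hi j
    have hni : n i ≤ N := Finset.le_sup hi
    have h1 : j + N = (j + (N - n i)) + n i := by omega
    have h2 : (j + (N - n i)) + m i = j + (N - n i + m i) := by omega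
    rw [h1, hmn i hi, h2]
  set M' : ι → ℕ := fun i => N - n i + m i with hM'
  obtain ⟨i₀, hi₀, hinf'⟩ := Finset.exists_mem_eq_inf' ht M'
  set K := t.inf' ht M' with hKdef
  have hK₀ : K = M' i₀ := hinf'
  have hKle : ∀ i ∈ t, K ≤ M' i := fun i hi => Finset.inf'_le M' hi
  refine ⟨i₀, hi₀, K, N, ?_, ?_⟩
  · intro j
    apply le_antisymm
    · calc t.inf (fun i => f i (j + N)) ≤ f i₀ (j + N) := Finset.inf_le hi₀
        _ = e (j + M' i₀) := key i₀ hi₀ j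
        _ = e (j + K) := by rw [hK₀]
    · apply Finset.le_inf
      intro i hi
      rw [key i hi j]
      exact hmono (Nat.add_le_add_left (hKle i hi) j)
  · intro j
    rw [key i₀ hi₀ j, hK₀]

lemma inf_filter_top {ι : Type*} (t : Finset ι) (f : ι → WithTop Ordinal.{u})
    (P : ι → Prop) [DecidablePred P] (h : ∀ i ∈ t, ¬P i → f i = ⊤) :
    t.inf f = (t.filter P).inf f := by
  apply le_antisymm (Finset.inf_mono (Finset.filter_subset P t))
  apply Finset.le_inf
  intro i hi
  by_cases hP : P i
  · exact Finset.inf_le (Finset.mem_filter.mpr ⟨hi, hP⟩)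
  · rw [h i hi hP]; exact le_top

lemma decomp_inf {X : Set M} (hX : IsDecompWrt p X) (t : Finset M) (ht : ↑t ⊆ X)
    (c : M → R) (j : ℕ) :
    UlmSeqOf p (∑ x ∈ t, c x • x) j = t.inf fun x => UlmSeqOf p (c x • x) j := by
  have h1 := hX.2.2 t ht (fun x => p ^ j * c x)
  have h2 : ∑ x ∈ t, (p ^ j * c x) • x = (p ^ j : R) • ∑ x ∈ t, c x • x := by
    rw [Finset.smul_sum]
    exact Finset.sum_congr rfl fun x _ => (mul_smul _ _ _)
  rw [h2] at h1
  rw [UlmSeqOf, h1]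
  apply Finset.inf_congr rfl
  intro x _
  rw [UlmSeqOf, mul_smul]

lemma coords_eq_zero {X : Set M} (hX : LinearIndependent R (fun x : X => (x : M)))
    (t : Finset M) (ht : ↑t ⊆ X) (c : M → R) (hc : ∑ x ∈ t, c x • x = 0) :
    ∀ x ∈ t, c x = 0 := by
  classical
  have hli : LinearIndependent R (fun x : (↑t : Set M) => (x : M)) := linearIndependent_subtype_iff.mpr ((linearIndependent_subtype_iff.mp hX).mono ht)
  have hli' : LinearIndependent R (fun x : {x // x ∈ t} => (x : M)) := hli
  rw [linearIndependent_iff'] at hli'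
  intro x hx
  have hsum : ∑ i ∈ t.attach, c i.1 • (i.1 : M) = 0 := by
    rw [Finset.sum_attach t (fun x => c x • x)]
    exact hc
  exact hli' t.attach (fun i => c i.1) hsum ⟨x, hx⟩ (Finset.mem_attach _ _)

lemma hull_mono {H H' : Submodule R M} (h : H ≤ H') : hull H ⊆ hull H' := by
  rintro x ⟨a, ha, hax⟩
  exact ⟨a, ha, h hax⟩

lemma extend_pdb {C : Set (Set M)} (hC : IsPDBWrt p C) {X : Set M} (hX : X ∈ C) (t : Finset M) :
    ∃ X' ∈ C, X ⊆ X' ∧ ∀ g ∈ t, g ∈ hull (Submodule.span R X') := by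
  classical
  induction t using Finset.induction with
  | empty => exact ⟨X, hX, subset_rfl, by simp⟩
  | @insert a t ha IH =>
    obtain ⟨X₁, hX₁C, hXX₁, hX₁⟩ := IH
    obtain ⟨X', hX'C, hX₁X', hg⟩ := hC.2.2.2 X₁ hX₁C a
    refine ⟨X', hX'C, hXX₁.trans hX₁X', ?_⟩
    intro g hgmem
    rcases Finset.mem_insert.mp hgmem with rfl | hgt
    · exact hg
    · exact hull_mono (Submodule.span_mono hX₁X') (hX₁ g hgt)

end PP2
end UlmW

section ZpFacts
open UlmW

variable (p : ℤ) [Fact (Prime p)]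

lemma zp_algebraMap_eq_cast (m : ℤ) : (algebraMap ℤ (Zp p)) m = (m : Zp p) := by
  have := map_intCast (algebraMap ℤ (Zp p)) m
  simpa using this

lemma zp_isUnit_iff (m : ℤ) : IsUnit ((m : ℤ) : Zp p) ↔ ¬ (p ∣ m) := by
  rw [← zp_algebraMap_eq_cast]
  rw [IsLocalization.AtPrime.isUnit_to_map_iff (Zp p) (Ideal.span {p} : Ideal ℤ) m]
  change m ∉ Ideal.span {p} ↔ _
  rw [Ideal.mem_span_singleton]

lemma zp_factor {a : Zp p} (ha : a ≠ 0) :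
    ∃ (k : ℕ) (v : Zp p), IsUnit v ∧ a = v * (p : Zp p) ^ k := by
  obtain ⟨⟨m, s⟩, hms⟩ := IsLocalization.surj (Ideal.span {p} : Ideal ℤ).primeCompl a
  have hs : IsUnit ((algebraMap ℤ (Zp p)) (s : ℤ)) := by
    rw [IsLocalization.AtPrime.isUnit_to_map_iff (Zp p) (Ideal.span {p} : Ideal ℤ)]
    exact s.2
  have hm : m ≠ 0 := by
    rintro rfl
    rw [map_zero] at hms
    rcases mul_eq_zero.mp hms with h | h
    · exact ha h
    · exact hs.ne_zero h
  have hfin : FiniteMultiplicity p m := by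
    rw [Int.finiteMultiplicity_iff]
    refine ⟨?_, hm⟩
    intro h1
    exact (Fact.out : Prime p).not_isUnit (Int.isUnit_iff_natAbs_eq.mpr h1)
  obtain ⟨k, m', hmm', hndvd⟩ : ∃ (k : ℕ) (m' : ℤ), m = p ^ k * m' ∧ ¬ p ∣ m' := by
    obtain ⟨m', hmm', hndvd⟩ := hfin.exists_eq_pow_mul_and_not_dvd
    exact ⟨multiplicity p m, m', hmm', hndvd⟩
  have hm'u : IsUnit ((m' : ℤ) : Zp p) := (zp_isUnit_iff p m').mpr hndvd
  refine ⟨k, ((m' : ℤ) : Zp p) * ((hs.unit⁻¹ : (Zp p)ˣ) : Zp p), hm'u.mul (Units.isUnit _), ?_⟩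
  have h1 : a * ((hs.unit : (Zp p)ˣ) : Zp p) = (algebraMap ℤ (Zp p)) m := by
    rw [hs.unit_spec]; exact hms
  have h2 : a = (algebraMap ℤ (Zp p)) m * ((hs.unit⁻¹ : (Zp p)ˣ) : Zp p) := by
    rw [← h1, mul_assoc, Units.mul_inv, mul_one]
  rw [h2, hmm', map_mul, map_pow, zp_algebraMap_eq_cast, zp_algebraMap_eq_cast]
  ring

lemma sum_term_ulm_le {G : Type u} [AddCommGroup G] [Module (Zp p) G]
    {ι : Type*} (t : Finset ι) (f : ι → Zp p)
    (hsum : ∑ i ∈ t, f i ≠ 0) :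
    ∃ i₀ ∈ t, f i₀ ≠ 0 ∧ ∀ (x : G) (j : ℕ),
      UlmSeqOf (p : Zp p) (f i₀ • x) j ≤ UlmSeqOf (p : Zp p) ((∑ i ∈ t, f i) • x) j := by
  classical
  set t' := t.filter (fun i => f i ≠ 0) with ht'
  have ht'ne : t'.Nonempty := by
    rcases Finset.eq_empty_or_nonempty t' with h | h
    · exfalso
      apply hsum
      apply Finset.sum_eq_zero
      intro i hi
      by_contra hne
      exact Finset.eq_empty_iff_forall_notMem.mp h i (Finset.mem_filter.mpr ⟨hi, hne⟩)
    · exact h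
  have hfac : ∀ i ∈ t', ∃ (k : ℕ) (v : Zp p), IsUnit v ∧ f i = v * (p : Zp p) ^ k := by
    intro i hi
    exact zp_factor p (Finset.mem_filter.mp hi).2
  have hfac' : ∀ i : ι, ∃ (k : ℕ) (v : Zp p), i ∈ t' → (IsUnit v ∧ f i = v * (p : Zp p) ^ k) := by
    intro i
    by_cases h : i ∈ t'
    · obtain ⟨k, v, hv⟩ := hfac i h; exact ⟨k, v, fun _ => hv⟩
    · exact ⟨0, 1, fun hc => absurd hc h⟩
  choose k v hkv using hfac'
  obtain ⟨i₀, hi₀, hk₀⟩ := Finset.exists_mem_eq_inf' ht'ne k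
  have hdvd : (p : Zp p) ^ (t'.inf' ht'ne k) ∣ ∑ i ∈ t, f i := by
    apply Finset.dvd_sum
    intro i hi
    by_cases h : f i = 0
    · rw [h]; exact dvd_zero _
    · have hit' : i ∈ t' := Finset.mem_filter.mpr ⟨hi, h⟩
      obtain ⟨hvu, hfi⟩ := hkv i hit'
      rw [hfi]
      exact Dvd.dvd.mul_left (pow_dvd_pow _ (Finset.inf'_le k hit')) _
  obtain ⟨hvu₀, hf₀⟩ := hkv i₀ hi₀
  refine ⟨i₀, (Finset.mem_filter.mp hi₀).1, (Finset.mem_filter.mp hi₀).2, ?_⟩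
  intro x j
  rw [hf₀, ulmseq_smul_unit_pow _ hvu₀]
  rw [← hk₀]
  exact ulmseq_smul_dvd _ hdvd x j

lemma exists_kernel {A : Type*} [CommRing A] [IsDomain A] {ι κ : Type*} [Fintype ι] [Fintype κ]
    (hcard : Fintype.card κ < Fintype.card ι) (Mat : ι → κ → A) :
    ∃ b : ι → A, b ≠ 0 ∧ ∀ z : κ, ∑ i : ι, b i * Mat i z = 0 := by
  classical
  by_contra hcon
  push_neg at hcon
  let K := FractionRing A
  let f : (ι → K) →ₗ[K] (κ → K) :=
    { toFun := fun b z => ∑ i : ι, b i * algebraMap A K (Mat i z)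
      map_add' := by
        intro b b'
        funext z
        simp [add_mul, Finset.sum_add_distrib]
      map_smul' := by
        intro r b
        funext z
        simp [Finset.mul_sum, mul_assoc]
        rw [Finset.mul_sum] }
  have hinj : Function.Injective f := by
    rw [← LinearMap.ker_eq_bot, LinearMap.ker_eq_bot']
    intro b hb
    by_contra hbne
    -- clear denominators
    obtain ⟨d, hd⟩ := IsLocalization.exist_integer_multiples (nonZeroDivisors A) Finset.univ b
    choose β hβ using fun i => hd i (Finset.mem_univ i)
    have hβne : β ≠ 0 := by
      intro h0
      apply hbne
      funext i
      have := hβ i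
      rw [h0] at this
      simp only [Pi.zero_apply, map_zero] at this
      have hdu : (algebraMap A K) (d : A) ≠ 0 := by
        simpa using (IsFractionRing.to_map_ne_zero_of_mem_nonZeroDivisors d.2)
      have : (algebraMap A K) (d : A) * b i = 0 := by
        rw [← Algebra.smul_def]; exact this.symm
      rcases mul_eq_zero.mp this with h | h
      · exact absurd h hdu
      · simp [h]
    obtain ⟨z, hz⟩ := hcon β hβne
    apply hz
    have : (algebraMap A K) (∑ i : ι, β i * Mat i z) = 0 := by
      push_cast [map_sum, map_mul]
      calc ∑ i : ι, (algebraMap A K) (β i) * (algebraMap A K) (Mat i z)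
          = ∑ i : ι, ((d : A) • b i) * (algebraMap A K) (Mat i z) := by
            refine Finset.sum_congr rfl fun i _ => ?_
            rw [hβ i]
        _ = (algebraMap A K) (d : A) * ∑ i : ι, b i * (algebraMap A K) (Mat i z) := by
            rw [Finset.mul_sum]
            refine Finset.sum_congr rfl fun i _ => ?_
            rw [Algebra.smul_def]; ring
        _ = 0 := by
            have hbz : ∑ i : ι, b i * (algebraMap A K) (Mat i z) = 0 := congrFun hb z
            rw [hbz, mul_zero]
    exact IsFractionRing.injective A K (by simpa using this)
  have hle := LinearMap.finrank_le_finrank_of_injective hinj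
  rw [Module.finrank_fintype_fun_eq_card, Module.finrank_fintype_fun_eq_card] at hle
  omega

end ZpFacts

open UlmW

theorem statement_3 (p : ℤ) [Fact (Prime p)] {G : Type u} [AddCommGroup G]
    [Module (Zp p) G]
    (C C' : Set (Set G)) (hC : IsPDBWrt (p : Zp p) C) (hC' : IsPDBWrt (p : Zp p) C')
    (e : ℕ → WithTop Ordinal.{u}) (he : IsUlmSeq e) (n : ℕ)
    (h : ∃ X ∈ C, HasAtLeast (p : Zp p) e n X)
    (Y : Set G) (hY : Y ∈ C') :
    ∃ Z ∈ C', Y ⊆ Z ∧ HasAtLeast (p : Zp p) e n Z := by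
  classical
  obtain ⟨X, hXC, sX, hsXsub, hcard, hsXe⟩ := h
  obtain ⟨Z, hZC', hYZ, hZhull⟩ := extend_pdb (p := (p : Zp p)) hC' hY sX
  have hZfin : Z.Finite := hC'.2.1 Z hZC'
  set ZF : Finset G := hZfin.toFinset with hZFdef
  have hZF : ↑ZF = Z := hZfin.coe_toFinset
  set Ze : Finset G := ZF.filter (fun z => UlmEquiv (UlmSeqOf (p : Zp p) z) e) with hZedef
  refine ⟨Z, hZC', hYZ, Ze, ?_, ?_, fun z hz => (Finset.mem_filter.mp hz).2⟩
  · rw [← hZF]; exact Finset.coe_subset.mpr (Finset.filter_subset _ _)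
  by_contra hn
  push_neg at hn
  -- hn : Ze.card < n
  have hdZ : IsDecompWrt (p : Zp p) Z := hC'.2.2.1 Z hZC'
  obtain ⟨X', hX'C, hXX', hX'hull⟩ := extend_pdb (p := (p : Zp p)) hC hXC ZF
  have hX'fin : X'.Finite := hC.2.1 X' hX'C
  set XF' : Finset G := hX'fin.toFinset with hXF'def
  have hXF' : ↑XF' = X' := hX'fin.coe_toFinset
  have hdX' : IsDecompWrt (p : Zp p) X' := hC.2.2.1 X' hX'C
  have hsXX' : ∀ x ∈ sX, x ∈ X' := fun x hx => hXX' (hsXsub hx)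
  have hsXF' : sX ⊆ XF' := by
    intro x hx
    rw [← Finset.mem_coe, hXF']
    exact hsXX' x hx
  have hsXsubX' : ↑sX ⊆ X' := fun x hx => hsXX' x hx
  -- coordinates of elements of sX over Z
  have hxcoord : ∀ x : G, ∃ (a : Zp p) (cc : G → Zp p), a ≠ 0 ∧
      (x ∈ sX → ∑ g ∈ ZF, cc g • g = a • x) := by
    intro x
    by_cases hx : x ∈ sX
    · obtain ⟨a, hane, hmem⟩ := hZhull x hx
      obtain ⟨cf, hsupp, hsum⟩ := Submodule.mem_span_set.mp hmem
      have hsupp' : cf.support ⊆ ZF := by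
        intro g hg
        rw [← Finset.mem_coe, hZF]
        exact hsupp hg
      refine ⟨a, cf, hane, fun _ => ?_⟩
      rw [← Finsupp.sum_of_support_subset cf hsupp' (fun g r => r • g)
        (fun g _ => zero_smul _ g)]
      exact hsum
    · exact ⟨1, 0, one_ne_zero, fun hc => absurd hc hx⟩
  choose a cZ ha hax using hxcoord
  -- coordinates of elements of ZF over X'
  have hzcoord : ∀ z : G, ∃ (b : Zp p) (dd : G → Zp p), b ≠ 0 ∧
      (z ∈ ZF → ∑ g ∈ XF', dd g • g = b • z) := by
    intro z
    by_cases hz : z ∈ ZF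
    · obtain ⟨b, hbne, hmem⟩ := hX'hull z hz
      obtain ⟨df, hsupp, hsum⟩ := Submodule.mem_span_set.mp hmem
      have hsupp' : df.support ⊆ XF' := by
        intro g hg
        rw [← Finset.mem_coe, hXF']
        exact hsupp hg
      refine ⟨b, df, hbne, fun _ => ?_⟩
      rw [← Finsupp.sum_of_support_subset df hsupp' (fun g r => r • g)
        (fun g _ => zero_smul _ g)]
      exact hsum
    · exact ⟨1, 0, one_ne_zero, fun hc => absurd hc hz⟩
  choose b dX hb hbz using hzcoord
  set A : Zp p := ∏ x ∈ sX, a x with hAdef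
  have hAne : A ≠ 0 := Finset.prod_ne_zero_iff.mpr (fun x _ => ha x)
  -- kernel vector
  have hcard2 : Fintype.card {z // z ∈ Ze} < Fintype.card {x // x ∈ sX} := by
    simp only [Fintype.card_coe]
    omega
  obtain ⟨β', hβ'ne, hker⟩ := exists_kernel hcard2
    (fun (x : {x // x ∈ sX}) (z : {z // z ∈ Ze}) =>
      (∏ x' ∈ sX.erase x.1, a x') * cZ x.1 z.1)
  set β : G → Zp p := fun g => if hg : g ∈ sX then β' ⟨g, hg⟩ else 0 with hβdef
  have hβsX : ∀ (x : {x // x ∈ sX}), β x.1 = β' x := fun x => dif_pos x.2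
  set w : G → Zp p := fun g => ∑ x ∈ sX, β x * ((∏ x' ∈ sX.erase x, a x') * cZ x g)
    with hwdef
  have hwZe : ∀ z ∈ Ze, w z = 0 := by
    intro z hz
    have hk := hker ⟨z, hz⟩
    show (∑ x ∈ sX, β x * ((∏ x' ∈ sX.erase x, a x') * cZ x z)) = 0
    rw [← Finset.sum_coe_sort sX
      (fun x => β x * ((∏ x' ∈ sX.erase x, a x') * cZ x z))]
    rw [← hk]
    exact Finset.sum_congr rfl fun x _ => by rw [hβsX x]
  set y : G := ∑ x ∈ sX, β x • x with hydef
  -- the combined Z-coordinates represent A • y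
  have h2sum : ∑ g ∈ ZF, w g • g = A • y := by
    calc ∑ g ∈ ZF, w g • g
        = ∑ g ∈ ZF, ∑ x ∈ sX, (β x * (∏ x' ∈ sX.erase x, a x')) • (cZ x g • g) := by
          refine Finset.sum_congr rfl fun g _ => ?_
          rw [hwdef, Finset.sum_smul]
          refine Finset.sum_congr rfl fun x _ => ?_
          rw [smul_smul, mul_assoc]
      _ = ∑ x ∈ sX, (β x * (∏ x' ∈ sX.erase x, a x')) • ∑ g ∈ ZF, cZ x g • g := by
          rw [Finset.sum_comm]
          exact Finset.sum_congr rfl fun x _ => (Finset.smul_sum).symm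
      _ = ∑ x ∈ sX, (β x * (∏ x' ∈ sX.erase x, a x')) • (a x • x) := by
          refine Finset.sum_congr rfl fun x hx => ?_
          rw [hax x hx]
      _ = ∑ x ∈ sX, (A * β x) • x := by
          refine Finset.sum_congr rfl fun x hx => ?_
          rw [smul_smul]
          congr 1
          rw [mul_assoc, mul_comm (∏ x' ∈ sX.erase x, a x') (a x),
            Finset.mul_prod_erase sX a hx, mul_comm]
      _ = A • y := by
          rw [hydef, Finset.smul_sum]
          exact Finset.sum_congr rfl fun x _ => (smul_smul _ _ _).symm
  set S : Finset G := ZF.filter (fun z => w z ≠ 0) with hSdef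
  have hSsub : S ⊆ ZF := Finset.filter_subset _ _
  have hSZe : ∀ z ∈ S, z ∉ Ze := by
    intro z hz hze
    exact (Finset.mem_filter.mp hz).2 (hwZe z hze)
  have hS2 : ∑ z ∈ S, w z • z = ∑ z ∈ ZF, w z • z := by
    apply Finset.sum_filter_of_ne
    intro z _ hne
    intro h0
    exact hne (by rw [h0, zero_smul])
  set B : Zp p := ∏ z ∈ S, b z with hBdef
  have hBne : B ≠ 0 := Finset.prod_ne_zero_iff.mpr (fun z _ => hb z)
  have h2sumS : ∑ z ∈ S, (B * w z) • z = (B * A) • y := by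
    calc ∑ z ∈ S, (B * w z) • z = B • ∑ z ∈ S, w z • z := by
          rw [Finset.smul_sum]
          exact Finset.sum_congr rfl fun z _ => (smul_smul _ _ _).symm
      _ = B • (A • y) := by rw [hS2, h2sum]
      _ = (B * A) • y := smul_smul _ _ _
  set E : G → Zp p := fun g => ∑ z ∈ S, (w z * ∏ z' ∈ S.erase z, b z') * dX z g
    with hEdef
  have hEsum : ∑ g ∈ XF', E g • g = (B * A) • y := by
    calc ∑ g ∈ XF', E g • g
        = ∑ g ∈ XF', ∑ z ∈ S, (w z * ∏ z' ∈ S.erase z, b z') • (dX z g • g) := by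
          refine Finset.sum_congr rfl fun g _ => ?_
          rw [hEdef, Finset.sum_smul]
          refine Finset.sum_congr rfl fun z _ => ?_
          rw [smul_smul]
      _ = ∑ z ∈ S, (w z * ∏ z' ∈ S.erase z, b z') • ∑ g ∈ XF', dX z g • g := by
          rw [Finset.sum_comm]
          exact Finset.sum_congr rfl fun z _ => (Finset.smul_sum).symm
      _ = ∑ z ∈ S, (w z * ∏ z' ∈ S.erase z, b z') • (b z • z) := by
          refine Finset.sum_congr rfl fun z hz => ?_
          rw [hbz z (hSsub hz)]
      _ = ∑ z ∈ S, (B * w z) • z := by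
          refine Finset.sum_congr rfl fun z hz => ?_
          rw [smul_smul]
          congr 1
          rw [mul_assoc, mul_comm (∏ z' ∈ S.erase z, b z') (b z),
            Finset.mul_prod_erase S b hz, mul_comm]
      _ = (B * A) • y := h2sumS
  set F : G → Zp p := fun g => if g ∈ sX then (B * A) * β g else 0 with hFdef
  have hFsum : ∑ g ∈ XF', F g • g = (B * A) • y := by
    have h1 : ∑ g ∈ sX, F g • g = ∑ g ∈ XF', F g • g := by
      apply Finset.sum_subset hsXF'
      intro g _ hgn
      rw [hFdef]
      simp only [if_neg hgn, zero_smul]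
    rw [← h1]
    calc ∑ g ∈ sX, F g • g = ∑ g ∈ sX, ((B * A) * β g) • g := by
          refine Finset.sum_congr rfl fun g hg => ?_
          rw [hFdef]
          simp only [if_pos hg]
      _ = (B * A) • y := by
          rw [hydef, Finset.smul_sum]
          exact Finset.sum_congr rfl fun x _ => (smul_smul _ _ _).symm
  have hEF : ∀ g ∈ XF', E g = F g := by
    have hzero : ∑ g ∈ XF', (E g - F g) • g = 0 := by
      have : ∑ g ∈ XF', (E g - F g) • g = (∑ g ∈ XF', E g • g) - ∑ g ∈ XF', F g • g := by
        rw [← Finset.sum_sub_distrib]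
        exact Finset.sum_congr rfl fun g _ => sub_smul _ _ _
      rw [this, hEsum, hFsum, sub_self]
    intro g hg
    have := coords_eq_zero hdX'.1 XF' (by rw [hXF']) (fun g => E g - F g) hzero g hg
    exact sub_eq_zero.mp this
  -- the height sequence of (B*A) • y
  set uu : ℕ → WithTop Ordinal.{u} := fun j => UlmSeqOf (p : Zp p) ((B * A) • y) j
    with huudef
  have hBAy : (B * A) • y = ∑ x ∈ sX, ((B * A) * β x) • x := by
    rw [hydef, Finset.smul_sum]
    exact Finset.sum_congr rfl fun x _ => smul_smul _ _ _
  have h3 : ∀ j, uu j = sX.inf fun x => UlmSeqOf (p : Zp p) (((B * A) * β x) • x) j := by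
    intro j
    rw [huudef]
    show UlmSeqOf (p : Zp p) ((B * A) • y) j = _
    rw [hBAy]
    exact decomp_inf (p : Zp p) hdX' sX hsXsubX' (fun g => (B * A) * β g) j
  set t₁ : Finset G := sX.filter (fun x => (B * A) * β x ≠ 0) with ht₁def
  have h3' : ∀ j, uu j = t₁.inf fun x => UlmSeqOf (p : Zp p) (((B * A) * β x) • x) j := by
    intro j
    rw [h3 j]
    apply inf_filter_top
    intro x _ hPx
    have hx0 : (B * A) * β x = 0 := by
      by_contra hc
      exact hPx hc
    rw [hx0]
    exact ulmseq_zero_smul _ x j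
  have ht₁ne : t₁.Nonempty := by
    obtain ⟨i, hi⟩ := Function.ne_iff.mp hβ'ne
    refine ⟨i.1, Finset.mem_filter.mpr ⟨i.2, ?_⟩⟩
    rw [hβsX i]
    exact mul_ne_zero (mul_ne_zero hBne hAne) hi
  have hf : ∀ x ∈ t₁, ∃ m N : ℕ, ∀ j,
      UlmSeqOf (p : Zp p) (((B * A) * β x) • x) (j + N) = e (j + m) := by
    intro x hx
    obtain ⟨hxsX, hxne⟩ := Finset.mem_filter.mp hx
    obtain ⟨k, v, hvu, hveq⟩ := zp_factor p hxne
    obtain ⟨m, N, hmn⟩ := hsXe x hxsX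
    refine ⟨k + m, N, fun j => ?_⟩
    rw [hveq, ulmseq_smul_unit_pow _ hvu]
    have h1 : j + N + k = (j + k) + N := by omega
    rw [h1, hmn (j + k)]
    congr 1
    omega
  obtain ⟨x₀, hx₀t₁, m₀, N₀, htinf, hfx₀⟩ :=
    tail_min (ulm_monotone he) t₁ ht₁ne _ hf
  have hu_tail : ∀ j, uu (j + N₀) = e (j + m₀) := by
    intro j
    rw [h3' (j + N₀)]
    exact htinf j
  have hx₀sX : x₀ ∈ sX := (Finset.mem_filter.mp hx₀t₁).1
  -- E x₀ = (B*A) * β x₀ ≠ 0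
  have hEx₀ : E x₀ = (B * A) * β x₀ := by
    rw [hEF x₀ (hsXF' hx₀sX), hFdef]
    simp only [if_pos hx₀sX]
  have hEx₀ne : E x₀ ≠ 0 := by
    rw [hEx₀]
    exact (Finset.mem_filter.mp hx₀t₁).2
  have hEx₀sum : ∑ z ∈ S, (w z * ∏ z' ∈ S.erase z, b z') * dX z x₀ ≠ 0 := hEx₀ne
  obtain ⟨z₀, hz₀S, hz₀ne, hterm⟩ :=
    sum_term_ulm_le (G := G) p S (fun z => (w z * ∏ z' ∈ S.erase z, b z') * dX z x₀) hEx₀sum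
  have htermle : ∀ j,
      UlmSeqOf (p : Zp p) (((w z₀ * ∏ z' ∈ S.erase z₀, b z') * dX z₀ x₀) • x₀) j ≤
        UlmSeqOf (p : Zp p) ((((B * A) * β x₀)) • x₀) j := by
    intro j
    have := hterm x₀ j
    rw [show (∑ z ∈ S, (w z * ∏ z' ∈ S.erase z, b z') * dX z x₀) = E x₀ from rfl, hEx₀] at this
    exact this
  -- the z₀ sequence
  have hq_eq : (B * w z₀) • z₀ = ∑ g ∈ XF', ((w z₀ * ∏ z' ∈ S.erase z₀, b z') * dX z₀ g) • g := by
    calc (B * w z₀) • z₀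
        = ((w z₀ * ∏ z' ∈ S.erase z₀, b z') * b z₀) • z₀ := by
          congr 1
          rw [mul_assoc, mul_comm (∏ z' ∈ S.erase z₀, b z') (b z₀),
            Finset.mul_prod_erase S b hz₀S, mul_comm]
      _ = (w z₀ * ∏ z' ∈ S.erase z₀, b z') • (b z₀ • z₀) := (smul_smul _ _ _).symm
      _ = (w z₀ * ∏ z' ∈ S.erase z₀, b z') • ∑ g ∈ XF', dX z₀ g • g := by
          rw [hbz z₀ (hSsub hz₀S)]
      _ = ∑ g ∈ XF', ((w z₀ * ∏ z' ∈ S.erase z₀, b z') * dX z₀ g) • g := by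
          rw [Finset.smul_sum]
          exact Finset.sum_congr rfl fun g _ => smul_smul _ _ _
  have hq3 : ∀ j, UlmSeqOf (p : Zp p) ((B * w z₀) • z₀) j =
      XF'.inf fun g => UlmSeqOf (p : Zp p) (((w z₀ * ∏ z' ∈ S.erase z₀, b z') * dX z₀ g) • g) j := by
    intro j
    rw [hq_eq]
    exact decomp_inf (p : Zp p) hdX' XF' (by rw [hXF']) _ j
  have hqle : ∀ j, UlmSeqOf (p : Zp p) ((B * w z₀) • z₀) j ≤
      UlmSeqOf (p : Zp p) (((w z₀ * ∏ z' ∈ S.erase z₀, b z') * dX z₀ x₀) • x₀) j := by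
    intro j
    rw [hq3 j]
    exact Finset.inf_le (hsXF' hx₀sX)
  have hSsubZ : ↑S ⊆ Z := by
    intro z hz
    rw [← hZF]
    exact Finset.coe_subset.mpr hSsub hz
  have h2 : ∀ j, uu j = S.inf fun z => UlmSeqOf (p : Zp p) ((B * w z) • z) j := by
    intro j
    rw [huudef]
    show UlmSeqOf (p : Zp p) ((B * A) • y) j = _
    rw [← h2sumS]
    exact decomp_inf (p : Zp p) hdZ S hSsubZ (fun g => B * w g) j
  have hule : ∀ j, uu j ≤ UlmSeqOf (p : Zp p) ((B * w z₀) • z₀) j := by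
    intro j
    rw [h2 j]
    exact Finset.inf_le hz₀S
  -- the sandwich
  have hqtail : ∀ j, UlmSeqOf (p : Zp p) ((B * w z₀) • z₀) (j + N₀) = e (j + m₀) := by
    intro j
    have h1 := hule (j + N₀)
    have h2' := hqle (j + N₀)
    have h3'' := htermle (j + N₀)
    have h4 := hfx₀ j
    have h5 := hu_tail j
    -- uu (j+N₀) ≤ q (j+N₀) ≤ term ≤ f x₀ (j+N₀) = uu (j+N₀)
    have heq : UlmSeqOf (p : Zp p) ((B * w z₀) • z₀) (j + N₀) = uu (j + N₀) := by
      apply le_antisymm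
      · calc UlmSeqOf (p : Zp p) ((B * w z₀) • z₀) (j + N₀)
            ≤ _ := h2'
          _ ≤ UlmSeqOf (p : Zp p) (((B * A) * β x₀) • x₀) (j + N₀) := h3''
          _ = e (j + m₀) := h4
          _ = uu (j + N₀) := h5.symm
      · exact h1
    rw [heq, h5]
  -- conclude z₀ has Ulm class e
  have hBw : B * w z₀ ≠ 0 := mul_ne_zero hBne (Finset.mem_filter.mp hz₀S).2
  obtain ⟨k₁, v₁, hv₁u, hv₁eq⟩ := zp_factor p hBw
  have hz₀e : UlmEquiv (UlmSeqOf (p : Zp p) z₀) e := by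
    refine ⟨m₀, N₀ + k₁, fun i => ?_⟩
    have := hqtail i
    rw [hv₁eq, ulmseq_smul_unit_pow _ hv₁u] at this
    rw [show i + (N₀ + k₁) = i + N₀ + k₁ by omega]
    exact this
  exact hSZe z₀ hz₀S (Finset.mem_filter.mpr ⟨hSsub hz₀S, hz₀e⟩)

end
end

section
/- Suppose G is a module over Z_p (the integers localized at a prime p) with a partial decomposition basis C. Then the collection C̃ = { {a₁x₁, …, aₙxₙ} : {x₁,…,xₙ} ⊆ X for some X ∈ C, with a₁,…,aₙ nonzero scalars } is a partial decomposition basis for G, and C̃ is closed under taking subsets and under replacing elements by nonzero scalar multiples: for any X ∈ C̃, any x₁,…,xₙ ∈ X and any nonzero scalars a₁,…,aₙ, the set {a₁x₁,…,aₙxₙ} belongs to C̃. -/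
noncomputable section

open UlmW

universe u

open UlmW

/-- The collection `C̃` of all sets of nonzero multiples of elements of members of `C`. -/
def Ctilde {R : Type*} [CommRing R] {G : Type u} [AddCommGroup G] [Module R G]
    (C : Set (Set G)) : Set (Set G) :=
  {Y | ∃ X ∈ C, ∃ s : Finset G, ↑s ⊆ X ∧ ∃ a : G → R,
    (∀ x ∈ s, a x ≠ 0) ∧ Y = (fun x => a x • x) '' ↑s}

section Aux

variable {R : Type*} [CommRing R] [IsDomain R] {G : Type u} [AddCommGroup G] [Module R G]

theorem aux_linIndep_smul {ι : Type*} {v : ι → G} (hv : LinearIndependent R v)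
    (w : ι → R) (hw : ∀ i, w i ≠ 0) : LinearIndependent R fun i => w i • v i := by
  rw [linearIndependent_iff'] at hv ⊢
  intro s g hg i hi
  have h := hv s (fun i => g i * w i) ?_ i hi
  · exact (mul_eq_zero.mp h).resolve_right (hw i)
  · rw [← hg]
    exact Finset.sum_congr rfl fun j _ => mul_smul _ _ _

theorem aux_decomp_image (p : R) {X : Set G} (hX : IsDecompWrt p X)
    (s : Finset G) (hs : ↑s ⊆ X) (a : G → R) (ha : ∀ u ∈ s, a u ≠ 0) :
    IsDecompWrt p ((fun u => a u • u) '' ↑s) := by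
  classical
  set f : G → G := fun u => a u • u with hf
  have hbase : LinearIndependent R fun x : (↑s : Set G) => (x : G) := LinearIndepOn.mono (v := id) hX.1 hs
  have hscaled : LinearIndependent R fun x : (↑s : Set G) => f x :=
    aux_linIndep_smul hbase (fun x => a x) (fun x => ha x (by exact_mod_cast x.2))
  have hinj : Set.InjOn f ↑s := by
    intro x hx y hy hxy
    have := hscaled.injective (a₁ := ⟨x, hx⟩) (a₂ := ⟨y, hy⟩) hxy
    exact Subtype.ext_iff.mp this
  refine ⟨(linearIndepOn_iff_image hinj).mp hscaled, ?_, ?_⟩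
  · rintro y ⟨u, hu, rfl⟩ b hb
    have hu' : u ∈ s := hu
    have := hX.2.1 u (hs hu) (b * a u) (mul_ne_zero hb (ha u hu'))
    simpa [hf, smul_smul] using this
  · intro t ht c
    set s' : Finset G := s.filter (fun u => f u ∈ t) with hs'
    have hsub : ↑s' ⊆ (↑s : Set G) := Finset.coe_subset.mpr (Finset.filter_subset _ s)
    have himg : s'.image f = t := by
      ext y
      simp only [Finset.mem_image, hs', Finset.mem_filter]
      constructor
      · rintro ⟨u, ⟨_, hu⟩, rfl⟩; exact hu
      · intro hy
        obtain ⟨u, hu, rfl⟩ := ht hy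
        exact ⟨u, ⟨hu, hy⟩, rfl⟩
    have hinj' : ∀ x ∈ s', ∀ y ∈ s', f x = f y → x = y := fun x hx y hy hxy =>
      hinj (hsub hx) (hsub hy) hxy
    have hsum : ∑ y ∈ t, c y • y = ∑ u ∈ s', (c (f u) * a u) • u := by
      rw [← himg, Finset.sum_image hinj']
      exact Finset.sum_congr rfl fun u _ => smul_smul _ _ _
    have hinf : (t.inf fun y => pheight p (c y • y)) =
        s'.inf fun u => pheight p ((c (f u) * a u) • u) := by
      rw [← himg, Finset.inf_image]
      refine Finset.inf_congr rfl fun u _ => ?_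
      simp only [hf, Function.comp, smul_smul]
    rw [hsum, hinf]
    exact hX.2.2 s' (hsub.trans hs) fun u => c (a u • u) * a u

omit [IsDomain R] in
theorem mem_Ctilde_self [Nontrivial R] {C : Set (Set G)} {X : Set G} (hX : X ∈ C)
    (hfin : X.Finite) : X ∈ Ctilde (R := R) C := by
  refine ⟨X, hX, hfin.toFinset, by simp, fun _ => (1 : R), fun _ _ => one_ne_zero, ?_⟩
  simp only [Set.Finite.coe_toFinset, one_smul]
  ext y; simp

end Aux

theorem statement_6 (p : ℤ) [Fact (Prime p)] {G : Type u} [AddCommGroup G]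
    [Module (Zp p) G]
    (C : Set (Set G)) (hC : IsPDBWrt (p : Zp p) C) :
    IsPDBWrt (p : Zp p) (Ctilde (R := Zp p) C) ∧
    ∀ Y ∈ Ctilde (R := Zp p) C, ∀ t : Finset G, ↑t ⊆ Y → ∀ b : G → Zp p,
      (∀ x ∈ t, b x ≠ 0) → ((fun x => b x • x) '' ↑t) ∈ Ctilde (R := Zp p) C := by
  classical
  obtain ⟨hCne, hCfin, hCdec, hCext⟩ := hC
  constructor
  · refine ⟨?_, ?_, ?_, ?_⟩
    · obtain ⟨X, hX⟩ := hCne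
      exact ⟨X, mem_Ctilde_self hX (hCfin X hX)⟩
    · rintro Y ⟨X, hX, s, hs, a, ha, rfl⟩
      exact s.finite_toSet.image _
    · rintro Y ⟨X, hX, s, hs, a, ha, rfl⟩
      exact aux_decomp_image _ (hCdec X hX) s hs a ha
    · rintro Y ⟨X, hX, s, hs, a, ha, rfl⟩ x
      obtain ⟨Y', hY', hXY', b, hb0, hbx⟩ := hCext X hX x
      have hfin : Y'.Finite := hCfin Y' hY'
      set t : Finset G := hfin.toFinset with htdef
      have hts : (↑t : Set G) = Y' := hfin.coe_toFinset
      set a' : G → Zp p := fun u => if u ∈ s then a u else 1 with ha'def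
      have ha' : ∀ u ∈ t, a' u ≠ 0 := by
        intro u _
        by_cases h : u ∈ s
        · simpa [ha'def, h] using ha u h
        · simp [ha'def, h]
      refine ⟨(fun u => a' u • u) '' ↑t, ⟨Y', hY', t, hts.le, a', ha', rfl⟩, ?_, ?_⟩
      · rintro y ⟨u, hu, rfl⟩
        have hu' : u ∈ s := hu
        refine ⟨u, ?_, ?_⟩
        · rw [hts]; exact hXY' (hs hu)
        · simp [ha'def, hu']
      · set d : Zp p := ∏ u ∈ t, a' u with hddef
        have hd : d ≠ 0 := Finset.prod_ne_zero_iff.mpr ha'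
        have hspan : ∀ v ∈ Submodule.span (Zp p) Y',
            d • v ∈ Submodule.span (Zp p) ((fun u => a' u • u) '' ↑t) := by
          intro v hv
          induction hv using Submodule.span_induction with
          | mem u hu =>
            have hu' : u ∈ t := by rw [← hts] at hu; exact_mod_cast hu
            have hdu : d = a' u * ∏ w ∈ t.erase u, a' w :=
              (Finset.mul_prod_erase t a' hu').symm
            rw [hdu, mul_comm, mul_smul]
            exact Submodule.smul_mem _ _
              (Submodule.subset_span ⟨u, Finset.mem_coe.mpr hu', rfl⟩)
          | zero => simp
          | add v w _ _ hv hw => rw [smul_add]; exact Submodule.add_mem _ hv hw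
          | smul r v _ hv => rw [smul_comm]; exact Submodule.smul_mem _ _ hv
        exact ⟨d * b, mul_ne_zero hd hb0, by rw [mul_smul]; exact hspan _ hbx⟩
  · rintro Y ⟨X, hX, s, hs, a, ha, rfl⟩ t ht b hb
    set s' : Finset G := s.filter (fun u => a u • u ∈ t) with hs'def
    refine ⟨X, hX, s',
      (Finset.coe_subset.mpr (Finset.filter_subset _ s)).trans hs,
      fun u => b (a u • u) * a u, ?_, ?_⟩
    · intro u hu
      rw [hs'def, Finset.mem_filter] at hu
      exact mul_ne_zero (hb _ hu.2) (ha u hu.1)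
    · ext z
      simp only [Set.mem_image, Finset.mem_coe, hs'def, Finset.mem_filter]
      constructor
      · rintro ⟨y, hy, rfl⟩
        obtain ⟨u, hu, rfl⟩ := ht hy
        exact ⟨u, ⟨hu, hy⟩, (smul_smul _ _ _).symm⟩
      · rintro ⟨u, ⟨hu, hut⟩, rfl⟩
        exact ⟨a u • u, hut, smul_smul _ _ _⟩

end
end
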